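/- If a univariate formal power series $u(x) \in \mathbb{C}[[x]]$ is algebraic over $\mathbb{C}(x)$, then it is $d$-finite, i.e., it satisfies a nontrivial linear differential equation $p_d(x)u^{(d)}(x) + \cdots + p_1(x)u'(x) + p_0(x)u(x) = 0$ with polynomial coefficients $p_i \in \mathbb{C}[x]$, $p_d \neq 0$. -/

import Mathlib

open Polynomial PowerSeries

set_option synthInstance.maxHeartbeats 1000000
set_option maxHeartbeats 2000000

noncomputable abbrev cps : Polynomial ℂ →+* PowerSeries ℂ := Polynomial.coeToPowerSeries.ringHom

noncomputable abbrev evu (u : PowerSeries ℂ) : Polynomial (Polynomial ℂ) →+* PowerSeries ℂ :=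
  Polynomial.eval₂RingHom cps u

lemma deriv_evu (u : PowerSeries ℂ) (q : Polynomial (Polynomial ℂ)) :
    ∃ r : Polynomial (Polynomial ℂ),
    PowerSeries.derivativeFun (evu u q) =
      evu u r + evu u (Polynomial.derivative q) * PowerSeries.derivativeFun u := by
  induction q using Polynomial.induction_on' with
  | add p q hp hq =>
    obtain ⟨r1, h1⟩ := hp
    obtain ⟨r2, h2⟩ := hq
    refine ⟨r1 + r2, ?_⟩
    simp only [map_add, Polynomial.derivative_add, PowerSeries.derivativeFun_add, h1, h2]
    ring
  | monomial n a =>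
    refine ⟨Polynomial.monomial n (Polynomial.derivative a), ?_⟩
    simp only [coe_eval₂RingHom, eval₂_monomial, Polynomial.derivative_monomial]
    rw [PowerSeries.derivativeFun_mul]
    have hda : PowerSeries.derivativeFun (cps a) = cps (Polynomial.derivative a) := by
      exact PowerSeries.derivativeFun_coe a
    have hpow : PowerSeries.derivativeFun (u ^ n)
        = n • u ^ (n - 1) • PowerSeries.derivativeFun u :=
      Derivation.leibniz_pow (D := PowerSeries.derivative ℂ) (a := u) n
    rw [hda, hpow]
    simp only [smul_eq_mul, nsmul_eq_mul, map_mul, map_natCast]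
    ring


lemma derivFun_zero : (0 : PowerSeries ℂ).derivativeFun = 0 := by
  exact map_zero (PowerSeries.derivative ℂ)

lemma rep_exists (u : PowerSeries ℂ) (Q : Polynomial (Polynomial ℂ)) (hQ : evu u Q = 0) (i : ℕ) :
    ∃ (k : ℕ) (Cp : Polynomial (Polynomial ℂ)),
      (evu u (Polynomial.derivative Q)) ^ k * (PowerSeries.derivativeFun^[i] u) = evu u Cp := by
  set S : PowerSeries ℂ := evu u (Polynomial.derivative Q) with hSdef
  set Du : PowerSeries ℂ := PowerSeries.derivativeFun u with hDudef
  obtain ⟨rQ, hrQ⟩ := deriv_evu u Q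
  rw [hQ, derivFun_zero] at hrQ
  have hB : S * Du = evu u (-rQ) := by rw [map_neg]; linear_combination -hrQ
  induction i with
  | zero =>
    exact ⟨0, Polynomial.X, by simp⟩
  | succ i ih =>
    obtain ⟨k, Cp, hCp⟩ := ih
    set w : PowerSeries ℂ := PowerSeries.derivativeFun^[i] u with hwdef
    set dQ : Polynomial (Polynomial ℂ) := Polynomial.derivative Q with hdQdef
    have rep2 : S ^ (k + 1) * w = evu u (dQ * Cp) := by
      rw [map_mul, ← hCp, ← hSdef, pow_succ]; ring
    obtain ⟨r2, h6⟩ := deriv_evu u (dQ * Cp)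
    obtain ⟨r5, h5⟩ := deriv_evu u dQ
    rw [← rep2] at h6
    have h3 : PowerSeries.derivativeFun (S ^ (k + 1) * w) =
        S ^ (k + 1) * PowerSeries.derivativeFun w + w * ((k + 1 : ℕ) • (S ^ k • PowerSeries.derivativeFun S)) := by
      rw [PowerSeries.derivativeFun_mul]
      have h4 : PowerSeries.derivativeFun (S ^ (k + 1)) =
          (k + 1 : ℕ) • S ^ (k + 1 - 1) • PowerSeries.derivativeFun S :=
        Derivation.leibniz_pow (D := PowerSeries.derivative ℂ) (a := S) (k + 1)
      rw [h4, Nat.add_sub_cancel, smul_eq_mul, smul_eq_mul]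
    rw [h3] at h6
    simp only [smul_eq_mul, nsmul_eq_mul] at h6
    push_cast at h6
    refine ⟨k + 3, dQ ^ 2 * r2 + dQ * Polynomial.derivative (dQ * Cp) * (-rQ)
      - ((k : Polynomial (Polynomial ℂ)) + 1) * (Cp * (dQ ^ 2 * r5 + dQ * Polynomial.derivative dQ * (-rQ))), ?_⟩
    rw [Function.iterate_succ_apply', ← hwdef]
    simp only [map_add, map_sub, map_mul, map_pow, map_natCast, map_one, ← hSdef, ← hdQdef]
    set Dw := PowerSeries.derivativeFun w
    set DS := PowerSeries.derivativeFun S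
    set A := evu u r2
    set M := evu u (Polynomial.derivative (dQ * Cp))
    set G := evu u r5
    set H := evu u (Polynomial.derivative dQ)
    set B := evu u (-rQ)
    set C := evu u Cp
    -- h6 : S^(k+1)*Dw + w*((k+1)*(S^k*DS)) = A + M*Du
    -- h5 : DS = G + H*Du ; hB : S*Du = B ; hCp : S^k*w = C
    linear_combination (S^2) * h6 + (M * S - ((k:PowerSeries ℂ)+1) * C * S * H) * hB
      + (-((k:PowerSeries ℂ)+1) * S^2 * G - ((k:PowerSeries ℂ)+1) * S^2 * H * Du) * hCp
      - ((k:PowerSeries ℂ)+1) * S^(k+2) * w * h5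

/-- A univariate formal power series is algebraic if it satisfies a nontrivial
polynomial equation with polynomial coefficients. -/
def PowerSeries.IsAlgebraicSeries {K : Type*} [CommRing K] (f : PowerSeries K) : Prop :=
  ∃ (d : ℕ) (P : ℕ → Polynomial K), (∃ i ≤ d, P i ≠ 0) ∧
    ∑ i ∈ Finset.range (d + 1), (P i : PowerSeries K) * f ^ i = 0

/-- If a univariate formal power series is algebraic then it is `d`-finite:
it satisfies a nontrivial linear differential equation
`p_d u⁽ᵈ⁾ + ⋯ + p₁ u' + p₀ u = 0` with polynomial coefficients. -/
theorem algebraic_dfinite (u : PowerSeries ℂ) (hu : u.IsAlgebraicSeries) :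
    ∃ (d : ℕ) (p : ℕ → Polynomial ℂ), p d ≠ 0 ∧
      ∑ i ∈ Finset.range (d + 1),
        (p i : PowerSeries ℂ) * (PowerSeries.derivativeFun)^[i] u = 0 := by
  classical
  obtain ⟨d0, P, ⟨i0, hi0d, hi0⟩, hrel⟩ := hu
  -- the annihilating polynomial
  set Q0 : Polynomial (Polynomial ℂ) :=
    ∑ i ∈ Finset.range (d0 + 1), Polynomial.C (P i) * Polynomial.X ^ i with hQ0def
  have hQ0ev : evu u Q0 = 0 := by
    rw [hQ0def, map_sum]
    simp only [map_mul, map_pow, coe_eval₂RingHom, Polynomial.eval₂_C, Polynomial.eval₂_X]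
    simpa [Polynomial.coeToPowerSeries.ringHom_apply] using hrel
  have hQ0ne : Q0 ≠ 0 := by
    intro h
    apply hi0
    have := congrArg (Polynomial.coeff · i0) h
    simpa [hQ0def, Polynomial.coeff_C_mul, Polynomial.coeff_X_pow, Finset.sum_ite_eq',
      Finset.mem_range, Nat.lt_succ_iff, hi0d] using this
  -- a minimal-degree annihilating polynomial
  have hex : ∃ n, ∃ q : Polynomial (Polynomial ℂ), q ≠ 0 ∧ evu u q = 0 ∧ q.natDegree = n :=
    ⟨Q0.natDegree, Q0, hQ0ne, hQ0ev, rfl⟩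
  obtain ⟨Q, hQne, hQ0, hQdeg⟩ := Nat.find_spec hex
  have hmin : ∀ q : Polynomial (Polynomial ℂ), q ≠ 0 → evu u q = 0 →
      Q.natDegree ≤ q.natDegree := by
    intro q h1 h2
    rw [hQdeg]
    exact Nat.find_min' hex ⟨q, h1, h2, rfl⟩
  have hcps_inj : Function.Injective (cps : Polynomial ℂ →+* PowerSeries ℂ) := by
    intro a b h
    exact Polynomial.coe_injective (R := ℂ) h
  have hdeg1 : Q.natDegree ≠ 0 := by
    intro h
    obtain ⟨c, rfl⟩ : ∃ c, Q = Polynomial.C c := ⟨Q.coeff 0, Polynomial.eq_C_of_natDegree_eq_zero h⟩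
    have : cps c = 0 := by simpa using hQ0
    have : c = 0 := hcps_inj (by simpa using this)
    exact hQne (by simp [this])
  have hQ'ne : Polynomial.derivative Q ≠ 0 := by
    intro h
    exact hdeg1 (Polynomial.natDegree_eq_zero_of_derivative_eq_zero h)
  have hS : evu u (Polynomial.derivative Q) ≠ 0 := by
    intro h
    have h1 := hmin _ hQ'ne h
    have h2 := Polynomial.natDegree_derivative_lt hdeg1
    omega
  -- set up the fraction field of power series as an algebra over rational functions
  set L := FractionRing (PowerSeries ℂ) with hLdef
  set ι : PowerSeries ℂ →+* L := algebraMap (PowerSeries ℂ) L with hιdef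
  have hι : Function.Injective ι := IsFractionRing.injective (PowerSeries ℂ) L
  have hg : Function.Injective (ι.comp cps) := hι.comp hcps_inj
  letI : Algebra (RatFunc ℂ) L := (IsFractionRing.lift hg).toAlgebra
  have halg : ∀ p : Polynomial ℂ,
      algebraMap (RatFunc ℂ) L (algebraMap (Polynomial ℂ) (RatFunc ℂ) p) = ι (cps p) := by
    intro p
    exact IsFractionRing.lift_algebraMap hg p
  have hcomp : (algebraMap (RatFunc ℂ) L).comp (algebraMap (Polynomial ℂ) (RatFunc ℂ))
      = ι.comp cps := RingHom.ext halg
  -- ι u is integral over RatFunc ℂ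
  set v : L := ι u with hvdef
  have hev_eq : ∀ q : Polynomial (Polynomial ℂ),
      Polynomial.aeval v (q.map (algebraMap (Polynomial ℂ) (RatFunc ℂ))) = ι (evu u q) := by
    intro q
    rw [Polynomial.aeval_def, Polynomial.eval₂_map, hcomp]
    exact (Polynomial.hom_eval₂ q cps ι u).symm
  have hint : IsIntegral (RatFunc ℂ) v := by
    refine IsAlgebraic.isIntegral ⟨Q.map (algebraMap (Polynomial ℂ) (RatFunc ℂ)), ?_, ?_⟩
    · exact (Polynomial.map_ne_zero_iff (IsFractionRing.injective (Polynomial ℂ) (RatFunc ℂ))).2 hQne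
    · rw [hev_eq, hQ0, map_zero]
  set E : IntermediateField (RatFunc ℂ) L := IntermediateField.adjoin (RatFunc ℂ) {v} with hEdef
  haveI : FiniteDimensional (RatFunc ℂ) E := IntermediateField.adjoin.finiteDimensional hint
  -- each iterated derivative lies in E
  have hev_mem : ∀ q : Polynomial (Polynomial ℂ), ι (evu u q) ∈ E := by
    intro q
    induction q using Polynomial.induction_on' with
    | add p q hp hq => rw [map_add, map_add]; exact add_mem hp hq
    | monomial n a =>
      have : ι (evu u (Polynomial.monomial n a)) = algebraMap (RatFunc ℂ) L
          (algebraMap (Polynomial ℂ) (RatFunc ℂ) a) * v ^ n := by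
        rw [halg]
        simp [map_mul, map_pow, hvdef]
      rw [this]
      exact mul_mem (IntermediateField.algebraMap_mem E _)
        (pow_mem (IntermediateField.mem_adjoin_simple_self (RatFunc ℂ) v) n)
  have hmem : ∀ i, ι (PowerSeries.derivativeFun^[i] u) ∈ E := by
    intro i
    obtain ⟨k, Cp, hCp⟩ := rep_exists u Q hQ0 i
    have hSne : ι (evu u (Polynomial.derivative Q)) ≠ 0 := fun h => hS (hι (by simpa using h))
    have heq : ι (PowerSeries.derivativeFun^[i] u)
        = ι (evu u Cp) / (ι (evu u (Polynomial.derivative Q))) ^ k := by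
      rw [eq_div_iff (pow_ne_zero k hSne), ← map_pow, mul_comm, ← map_mul, hCp]
    rw [heq]
    exact div_mem (hev_mem Cp) (pow_mem (hev_mem _) k)
  -- linear dependence of the iterated derivatives over RatFunc ℂ
  set N := Module.finrank (RatFunc ℂ) E with hNdef
  set f : Fin (N + 1) → E := fun i => ⟨ι (PowerSeries.derivativeFun^[i] u), hmem i⟩ with hfdef
  have hnli : ¬ LinearIndependent (RatFunc ℂ) f := by
    intro h
    have := h.fintype_card_le_finrank
    simp [hNdef] at this
  obtain ⟨c, hc0, i1, hci⟩ := Fintype.not_linearIndependent_iff.mp hnli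
  -- the relation, pushed to L
  have hrelL : ∑ i : Fin (N + 1), c i • ι (PowerSeries.derivativeFun^[i] u) = 0 := by
    have h1 := congrArg E.val.toLinearMap hc0
    rw [map_sum, map_zero] at h1
    simp only [map_smul] at h1
    exact h1
  -- coefficients indexed by ℕ
  set c' : ℕ → RatFunc ℂ := fun i => if h : i < N + 1 then c ⟨i, h⟩ else 0 with hc'def
  have hrelN : ∑ i ∈ Finset.range (N + 1), c' i • ι (PowerSeries.derivativeFun^[i] u) = 0 := by
    rw [Finset.sum_range fun i => c' i • ι (PowerSeries.derivativeFun^[i] u)]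
    rw [← hrelL]
    apply Finset.sum_congr rfl
    intro i _
    simp [hc'def, i.isLt, Nat.lt_succ_iff.mp i.isLt]
  -- the largest index with nonzero coefficient
  set T := (Finset.range (N + 1)).filter (fun i => c' i ≠ 0) with hTdef
  have hTne : T.Nonempty := ⟨i1, by simp [hTdef, hc'def, i1.isLt, Nat.lt_succ_iff.mp i1.isLt, hci]⟩
  set dm := T.max' hTne with hdmdef
  have hdmT : dm ∈ T := T.max'_mem hTne
  have hdm_lt : dm < N + 1 := by simpa [hTdef] using (Finset.mem_filter.1 hdmT).1
  have hcdm : c' dm ≠ 0 := (Finset.mem_filter.1 hdmT).2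
  have hbig : ∀ i, dm < i → c' i = 0 := by
    intro i hi
    by_contra h
    rcases lt_or_ge i (N + 1) with h2 | h2
    · have hmem' : i ∈ T := Finset.mem_filter.2 ⟨Finset.mem_range.2 h2, h⟩
      have hle := T.le_max' i hmem'
      omega
    · refine h ?_
      show (if h : i < N + 1 then c ⟨i, h⟩ else 0) = 0
      rw [dif_neg (by omega)]
  have hrel2 : ∑ i ∈ Finset.range (dm + 1), c' i • ι (PowerSeries.derivativeFun^[i] u) = 0 := by
    rw [← hrelN]
    apply Finset.sum_subset
    · intro i hi
      simp only [Finset.mem_range] at hi ⊢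
      omega
    · intro i _ hi
      rw [hbig i (by simp only [Finset.mem_range] at hi ⊢; omega), zero_smul]
  -- clear denominators
  obtain ⟨b, hb⟩ := IsLocalization.exist_integer_multiples
    (nonZeroDivisors (Polynomial ℂ)) (Finset.range (dm + 1)) c'
  set q : ℕ → Polynomial ℂ := fun i =>
    if hi : i ∈ Finset.range (dm + 1) then (hb i hi).choose else 0 with hqdef
  have hq : ∀ i ∈ Finset.range (dm + 1),
      algebraMap (Polynomial ℂ) (RatFunc ℂ) (q i) = (b : Polynomial ℂ) • c' i := by
    intro i hi
    show algebraMap (Polynomial ℂ) (RatFunc ℂ)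
      (if hi' : i ∈ Finset.range (dm + 1) then (hb i hi').choose else 0) = _
    rw [dif_pos hi]
    exact (hb i hi).choose_spec
  have hbne : algebraMap (Polynomial ℂ) (RatFunc ℂ) (b : Polynomial ℂ) ≠ 0 := by
    rw [map_ne_zero_iff _ (IsFractionRing.injective (Polynomial ℂ) (RatFunc ℂ))]
    exact nonZeroDivisors.coe_ne_zero b
  refine ⟨dm, q, ?_, ?_⟩
  · intro h0
    have hqm := hq dm (Finset.self_mem_range_succ dm)
    rw [h0, map_zero, Algebra.smul_def] at hqm
    exact hcdm ((mul_eq_zero.1 hqm.symm).resolve_left hbne)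
  · apply hι
    rw [map_sum, map_zero]
    have hterm : ∀ i ∈ Finset.range (dm + 1),
        ι ((q i : PowerSeries ℂ) * PowerSeries.derivativeFun^[i] u)
          = algebraMap (RatFunc ℂ) L (algebraMap (Polynomial ℂ) (RatFunc ℂ) (b : Polynomial ℂ))
            * (c' i • ι (PowerSeries.derivativeFun^[i] u)) := by
      intro i hi
      rw [map_mul]
      have h1 : ι ((q i : PowerSeries ℂ)) = algebraMap (RatFunc ℂ) L
          (algebraMap (Polynomial ℂ) (RatFunc ℂ) (q i)) := by
        rw [halg]
        exact congrArg ι (Polynomial.coeToPowerSeries.ringHom_apply (φ := q i)).symm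
      rw [h1, hq i hi, Algebra.smul_def, map_mul, Algebra.smul_def, mul_assoc]
    rw [Finset.sum_congr rfl hterm, ← Finset.mul_sum, hrel2, mul_zero]
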